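/- Let E be a strongly connected finite directed graph with no sources and n ≥ 1. The connected components of E(n) are exactly the sets {μ : μ a path of length < n with s(μ) ∈ Λ}, indexed by the equivalence classes Λ of ∼_n on E^0. -/

import Mathlib

/-- A directed graph: vertices, edges, range and source maps. -/
structure DGraph where
  V : Type
  E : Type
  r : E → V
  s : E → V

namespace DGraph

variable {G : DGraph}

/-- A path in a directed graph: a word of composable edges together with a source vertex
(so that length-zero paths are vertices). -/
structure Path (G : DGraph) where
  src : G.V
  edges : List G.E
  chain : List.Chain' (fun a b => G.s a = G.r b) edges
  srcEq : ∀ a ∈ edges.getLast?, G.s a = src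

/-- The range of a path. -/
def Path.rng (p : G.Path) : G.V := p.edges.head?.elim p.src G.r

/-- The length of a path. -/
def Path.length (p : G.Path) : ℕ := p.edges.length

/-- The length-zero path at a vertex. -/
def Path.nil (G : DGraph) (v : G.V) : G.Path :=
  ⟨v, [], List.isChain_nil, by simp⟩

@[simp] theorem Path.length_nil (v : G.V) : (Path.nil G v).length = 0 := rfl

/-- Prepend an edge to a path. -/
def Path.cons (e : G.E) (p : G.Path) (h : p.rng = G.s e) : G.Path where
  src := p.src
  edges := e :: p.edges
  chain := by
    unfold List.Chain'; rw [List.isChain_cons]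
    refine ⟨fun b hb => ?_, p.chain⟩
    rw [← h]
    simp [Path.rng, Option.mem_def.mp hb]
  srcEq := by
    intro a ha
    cases hp : p.edges with
    | nil =>
      rw [hp] at ha
      simp only [List.getLast?_singleton, Option.mem_def, Option.some.injEq] at ha
      subst ha
      have h0 : p.rng = p.src := by simp [Path.rng, hp]
      rw [← h, h0]
    | cons f t =>
      apply p.srcEq
      rw [hp]
      rw [hp, List.getLast?_cons_cons] at ha
      exact ha

@[simp] theorem Path.length_cons (e : G.E) (p : G.Path) (h : p.rng = G.s e) :
    (Path.cons e p h).length = p.length + 1 := rfl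

/-- Remove the first edge of a path. -/
def Path.tail (p : G.Path) : G.Path where
  src := p.src
  edges := p.edges.tail
  chain := p.chain.tail
  srcEq := by
    intro a ha
    apply p.srcEq
    cases hp : p.edges with
    | nil => rw [hp] at ha; simp at ha
    | cons f t =>
      rw [hp] at ha
      simp only [List.tail_cons] at ha
      cases t with
      | nil => simp at ha
      | cons g u => rw [List.getLast?_cons_cons]; exact ha

@[simp] theorem Path.length_tail (p : G.Path) : p.tail.length = p.length - 1 := by
  simp [Path.tail, Path.length]

/-- The initial segment of a path consisting of its first `k` edges. -/
def Path.take (p : G.Path) (k : ℕ) : G.Path where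
  src := (p.edges.drop k).head?.elim p.src G.r
  edges := p.edges.take k
  chain := p.chain.take k
  srcEq := by
    intro a ha
    have hc : List.Chain' (fun a b => G.s a = G.r b) (p.edges.take k ++ p.edges.drop k) := by
      rw [List.take_append_drop]; exact p.chain
    unfold List.Chain' at hc; rw [List.isChain_append] at hc
    obtain ⟨-, -, hadj⟩ := hc
    cases hd : p.edges.drop k with
    | nil =>
      have htake : p.edges.take k = p.edges := by
        have h1 := List.take_append_drop k p.edges
        rw [hd, List.append_nil] at h1
        exact h1
      simp only [List.head?_nil, Option.elim]
      exact p.srcEq a (htake ▸ ha)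
    | cons f t =>
      simp only [List.head?_cons, Option.elim]
      exact hadj a ha f (by rw [hd]; simp)

/-- `[μ]_n` : the initial segment of `μ` of length `|μ| mod n`. -/
def Path.trunc (m : ℕ) (p : G.Path) : G.Path := p.take (p.length % m)

/-- Concatenation of paths, `p` followed after `q` (so `p.append q` has range the range of `p`
and source the source of `q`). -/
def Path.append (p q : G.Path) (h : p.src = q.rng) : G.Path where
  src := q.src
  edges := p.edges ++ q.edges
  chain := by
    unfold List.Chain'; rw [List.isChain_append]
    refine ⟨p.chain, q.chain, fun a ha b hb => ?_⟩
    rw [p.srcEq a ha, h]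
    simp [Path.rng, Option.mem_def.mp hb]
  srcEq := by
    intro a ha
    cases hq : q.edges with
    | nil =>
      rw [hq, List.append_nil] at ha
      have h0 : q.rng = q.src := by simp [Path.rng, hq]
      rw [p.srcEq a ha, h, h0]
    | cons f t =>
      apply q.srcEq
      rw [hq]
      rw [hq, List.getLast?_append_cons] at ha
      exact ha

/-- A graph is row-finite if every vertex receives finitely many edges. -/
def RowFinite (G : DGraph) : Prop := ∀ v : G.V, {e : G.E | G.r e = v}.Finite

/-- A graph has no sources if every vertex receives an edge. -/
def NoSources (G : DGraph) : Prop := ∀ v : G.V, ∃ e : G.E, G.r e = v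

/-- A graph is strongly connected if for all vertices `v, w` there is a path from `w` to `v`. -/
def StronglyConnected (G : DGraph) : Prop :=
  ∀ v w : G.V, ∃ p : G.Path, p.src = w ∧ p.rng = v

/-- The set of paths of length less than `n`. -/
abbrev PathLt (G : DGraph) (n : ℕ) := {p : G.Path // p.length < n}

/-- The graph `E(n)` of Kribs and Solel: vertices are paths of length `< n`, and edges
are pairs `(e, μ)` with `r(μ) = s(e)` and `|μ| < n`, with source `μ` and range `[eμ]_n`. -/
def Eln (G : DGraph) (n : ℕ) : DGraph where
  V := PathLt G n
  E := {q : G.E × G.Path // q.2.length + 1 ≤ n ∧ q.2.rng = G.s q.1}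
  s := fun q => ⟨q.1.2, Nat.lt_of_succ_le q.2.1⟩
  r := fun q =>
    if h : q.1.2.length + 1 < n then
      ⟨Path.cons q.1.1 q.1.2 q.2.2, by simpa using h⟩
    else
      ⟨Path.nil G (G.r q.1.1), Nat.lt_of_lt_of_le (Nat.succ_pos _) q.2.1⟩

/-- A vertex of `E`, regarded as a length-zero vertex of `E(n)`. -/
def vtx (G : DGraph) (n : ℕ) (hn : 0 < n) (v : G.V) : PathLt G n :=
  ⟨Path.nil G v, by simpa using hn⟩

/-- `d` is the greatest common divisor of the set `S` of natural numbers. -/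
def IsGCDOf (d : ℕ) (S : Set ℕ) : Prop :=
  (∀ k ∈ S, d ∣ k) ∧ ∀ c : ℕ, (∀ k ∈ S, c ∣ k) → c ∣ d

/-- The set of lengths of (nonempty) cycles of `G`. -/
def CycleLengths (G : DGraph) : Set ℕ :=
  {k | ∃ p : G.Path, p.rng = p.src ∧ p.edges ≠ [] ∧ p.length = k}

/-- The set of lengths of (nonempty) cycles of `G` based at `v`. -/
def CycleLengthsAt (G : DGraph) (v : G.V) : Set ℕ :=
  {k | ∃ p : G.Path, p.src = v ∧ p.rng = v ∧ p.edges ≠ [] ∧ p.length = k}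

/-- The relation `v ∼ w` iff there is a path from `w` to `v` whose length is divisible by `d`. -/
def SimRel (G : DGraph) (d : ℕ) (v w : G.V) : Prop :=
  ∃ p : G.Path, p.src = w ∧ p.rng = v ∧ d ∣ p.length

/-- The connected-component relation of a graph: the smallest equivalence relation
identifying the range and the source of each edge. -/
def Comp (G : DGraph) : G.V → G.V → Prop :=
  Relation.EqvGen (fun a b => ∃ f : G.E, G.r f = a ∧ G.s f = b)

/-- The adjacency matrix of `E(n)` acting on vectors indexed by `E^{<n}`. -/
noncomputable def Aact (G : DGraph) (n : ℕ) (g : PathLt G n → ℝ) (v : PathLt G n) : ℝ :=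
  ∑ᶠ (f : (Eln G n).E) (_ : (Eln G n).r f = v), g ((Eln G n).s f)

/-- The pushforward of a vector on `E^{<n}` along `ν ↦ [ν]_m`. -/
noncomputable def pushf (G : DGraph) (n m : ℕ) (g : PathLt G n → ℝ) (μ : PathLt G m) : ℝ :=
  ∑ᶠ (ν : PathLt G n) (_ : Path.trunc m ν.1 = μ.1), g ν

instance : TopologicalSpace G.Path := ⊥

/-- The inverse limit `lim← E^{<n_k}` along the truncation maps. -/
def InvLim (G : DGraph) (n : ℕ → ℕ) : Type :=
  {f : (k : ℕ) → PathLt G (n k) // ∀ k, Path.trunc (n k) (f (k+1)).1 = (f k).1}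

instance (G : DGraph) (n : ℕ → ℕ) : TopologicalSpace (InvLim G n) :=
  inferInstanceAs (TopologicalSpace
    {f : (k : ℕ) → PathLt G (n k) // ∀ k, Path.trunc (n k) (f (k+1)).1 = (f k).1})

noncomputable instance (G : DGraph) (n : ℕ → ℕ) : MeasurableSpace (InvLim G n) := borel _

end DGraph

namespace DGraph

variable {G : DGraph}

theorem Path.ext' {p q : G.Path} (h1 : p.src = q.src) (h2 : p.edges = q.edges) :
    p = q := by
  cases p; cases q; simp_all

@[simp] theorem Path.length_take (p : G.Path) (k : ℕ) :
    (p.take k).length = min k p.length := by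
  simp [Path.take, Path.length]

@[simp] theorem Path.rng_take (p : G.Path) (k : ℕ) : (p.take k).rng = p.rng := by
  cases k with
  | zero => cases he : p.edges <;> simp [Path.take, Path.rng, he]
  | succ m => cases he : p.edges <;> simp [Path.take, Path.rng, he]

theorem Path.take_zero (p : G.Path) : p.take 0 = Path.nil G p.rng := by
  apply Path.ext' <;> simp [Path.take, Path.nil, Path.rng]

theorem Path.take_length (p : G.Path) : p.take p.length = p := by
  apply Path.ext'
  · simp [Path.take, Path.length]
  · simp [Path.take, Path.length]

theorem Path.rng_append (p q : G.Path) (h : p.src = q.rng) :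
    (p.append q h).rng = p.rng := by
  cases hpe : p.edges with
  | nil => simp [Path.append, Path.rng, hpe, h]
  | cons e t => simp [Path.append, Path.rng, hpe]

@[simp] theorem Path.length_append (p q : G.Path) (h : p.src = q.rng) :
    (p.append q h).length = p.length + q.length := by
  simp [Path.append, Path.length]

@[simp] theorem Path.src_append (p q : G.Path) (h : p.src = q.rng) :
    (p.append q h).src = q.src := rfl

theorem Path.tail_rng (p : G.Path) (e : G.E) (rest : List G.E)
    (hp : p.edges = e :: rest) : p.tail.rng = G.s e := by
  cases hr : rest with
  | nil =>
    have : p.tail.rng = p.src := by simp [Path.tail, Path.rng, hp, hr]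
    rw [this]
    exact (p.srcEq e (by simp [hp, hr])).symm
  | cons f t =>
    have hc := p.chain
    rw [hp, hr] at hc; unfold List.Chain' at hc; rw [List.isChain_cons_cons] at hc
    simp [Path.tail, Path.rng, hp, hr, hc.1]

/-- A path of length `< n`, as a vertex of `E(n)`, obtained by truncating. -/
def tv (n : ℕ) (hn : 0 < n) (p : G.Path) : PathLt G n :=
  ⟨p.take (p.length % n), by
    rw [Path.length_take]
    exact lt_of_le_of_lt (min_le_left _ _) (Nat.mod_lt _ hn)⟩

theorem walk (n : ℕ) (hn : 0 < n) (l : List G.E) :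
    ∀ p : G.Path, p.edges = l →
      Comp (Eln G n) (tv n hn p) ⟨Path.nil G p.src, by simpa using hn⟩ := by
  induction l with
  | nil =>
    intro p hp
    have h0 : p.length = 0 := by simp [Path.length, hp]
    have : tv n hn p = ⟨Path.nil G p.src, by simpa using hn⟩ := by
      apply Subtype.ext
      show p.take (p.length % n) = Path.nil G p.src
      apply Path.ext'
      · simp [Path.take, h0, Path.nil, hp]
      · simp [Path.take, h0, Path.nil]
    rw [this]
    exact Relation.EqvGen.refl _
  | cons e rest ih =>
    intro p hp
    set q := p.tail with hq
    have hqe : q.edges = rest := by simp [hq, Path.tail, hp]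
    have hqs : q.src = p.src := rfl
    have hIH := ih q hqe
    have hql : q.length = rest.length := by simp [Path.length, hqe]
    have hpl : p.length = rest.length + 1 := by simp [Path.length, hp]
    set k := q.length % n with hk
    have hkq : k ≤ q.length := Nat.mod_le _ _
    have hkn : k < n := Nat.mod_lt _ hn
    have hqrng : q.rng = G.s e := Path.tail_rng p e rest hp
    have htrng : (q.take k).rng = G.s e := by rw [Path.rng_take]; exact hqrng
    have htlen : (q.take k).length = k := by rw [Path.length_take]; omega
    have hle : (q.take k).length + 1 ≤ n := by omega
    let f : (Eln G n).E := ⟨(e, q.take k), hle, htrng⟩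
    have hsf : (Eln G n).s f = tv n hn q := rfl
    have hrf : (Eln G n).r f = tv n hn p := by
      by_cases hcase : k + 1 < n
      · have hcase' : (q.take k).length + 1 < n := by omega
        have hr1 : (Eln G n).r f = ⟨Path.cons e (q.take k) htrng, by
            simpa [htlen] using hcase⟩ := by
          show dite _ _ _ = _
          exact dif_pos hcase'
        rw [hr1]
        apply Subtype.ext
        have hmod : p.length % n = k + 1 := by
          have hd := Nat.div_add_mod q.length n
          have e1 : p.length = (k + 1) + n * (q.length / n) := by omega
          rw [e1, Nat.add_mul_mod_self_left, Nat.mod_eq_of_lt hcase]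
        show Path.cons e (q.take k) htrng = p.take (p.length % n)
        rw [hmod]
        apply Path.ext'
        · simp [Path.cons, Path.take, hp, hqe]
          rw [hqs]
        · simp [Path.cons, Path.take, hp, hqe]
      · have hkn' : k + 1 = n := by omega
        have hcase' : ¬ (q.take k).length + 1 < n := by omega
        have hr1 : (Eln G n).r f = ⟨Path.nil G (G.r e), lt_of_lt_of_le (Nat.succ_pos _) hle⟩ := by
          show dite _ _ _ = _
          exact dif_neg hcase'
        rw [hr1]
        apply Subtype.ext
        have hmod : p.length % n = 0 := by
          have hd := Nat.div_add_mod q.length n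
          have e1 : p.length = 0 + n * (q.length / n + 1) := by
            have hms : n * (q.length / n + 1) = n * (q.length / n) + n := Nat.mul_succ n _
            omega
          rw [e1, Nat.add_mul_mod_self_left, Nat.zero_mod]
        show Path.nil G (G.r e) = p.take (p.length % n)
        rw [hmod]
        apply Path.ext'
        · simp [Path.take, Path.nil, hp]
        · simp [Path.take, Path.nil]
    have hstep : Comp (Eln G n) (tv n hn p) (tv n hn q) :=
      Relation.EqvGen.rel _ _ ⟨f, hrf, hsf⟩
    exact Relation.EqvGen.trans _ _ _ hstep (hqs ▸ hIH)

theorem comp_to_nil (n : ℕ) (hn : 0 < n) (μ : PathLt G n) :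
    Comp (Eln G n) μ ⟨Path.nil G μ.1.src, by simpa using hn⟩ := by
  have h := walk n hn μ.1.edges μ.1 rfl
  have hμ : tv n hn μ.1 = μ := by
    apply Subtype.ext
    show μ.1.take (μ.1.length % n) = μ.1
    rw [Nat.mod_eq_of_lt μ.2]
    exact Path.take_length μ.1
  rwa [hμ] at h

theorem nil_comp_nil (n : ℕ) (hn : 0 < n) (σ : G.Path) (hd : n ∣ σ.length) :
    Comp (Eln G n) ⟨Path.nil G σ.rng, by simpa using hn⟩
      ⟨Path.nil G σ.src, by simpa using hn⟩ := by
  have h := walk n hn σ.edges σ rfl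
  have h0 : tv n hn σ = ⟨Path.nil G σ.rng, by simpa using hn⟩ := by
    apply Subtype.ext
    show σ.take (σ.length % n) = Path.nil G σ.rng
    rw [Nat.mod_eq_zero_of_dvd hd]
    exact Path.take_zero σ
  rwa [h0] at h

@[simp] theorem Path.rng_nil (v : G.V) : (Path.nil G v).rng = v := rfl
@[simp] theorem Path.src_nil (v : G.V) : (Path.nil G v).src = v := rfl

theorem simrel_refl (d : ℕ) (v : G.V) : SimRel G d v v :=
  ⟨Path.nil G v, rfl, rfl, by simp⟩

theorem simrel_trans {d : ℕ} {v w u : G.V} (h1 : SimRel G d v w) (h2 : SimRel G d w u) :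
    SimRel G d v u := by
  obtain ⟨p, hp1, hp2, hp3⟩ := h1
  obtain ⟨q, hq1, hq2, hq3⟩ := h2
  refine ⟨p.append q (hp1.trans hq2.symm), ?_, ?_, ?_⟩
  · simpa using hq1
  · rw [Path.rng_append]; exact hp2
  · rw [Path.length_append]; exact dvd_add hp3 hq3

theorem length_eq_zero_iff (p : G.Path) : p.length = 0 ↔ p.edges = [] := by
  simp [Path.length]

theorem simrel_symm (hsc : StronglyConnected G) {P n : ℕ}
    (hP : IsGCDOf P (CycleLengths G)) {v w : G.V}
    (h : SimRel G (Nat.gcd P n) v w) : SimRel G (Nat.gcd P n) w v := by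
  obtain ⟨p, hp1, hp2, hp3⟩ := h
  obtain ⟨q, hq1, hq2⟩ := hsc w v
  refine ⟨q, hq1, hq2, ?_⟩
  by_cases hc : p.edges = [] ∧ q.edges = []
  · have : q.length = 0 := (length_eq_zero_iff q).mpr hc.2
    simp [this]
  · have hcyc : (p.append q (hp1.trans hq2.symm)).length ∈ CycleLengths G := by
      refine ⟨p.append q (hp1.trans hq2.symm), ?_, ?_, rfl⟩
      · rw [Path.rng_append, Path.src_append, hp2, hq1]
      · intro hnil
        simp only [Path.append, List.append_eq_nil_iff] at hnil
        exact hc hnil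
    have hPd := hP.1 _ hcyc
    rw [Path.length_append] at hPd
    have hgP : Nat.gcd P n ∣ P := Nat.gcd_dvd_left _ _
    have h1 : Nat.gcd P n ∣ p.length + q.length := hgP.trans hPd
    have := Nat.dvd_sub h1 hp3
    simpa using this

theorem adj_simrel (n : ℕ) (P : ℕ) {a b : (Eln G n).V}
    (h : ∃ f : (Eln G n).E, (Eln G n).r f = a ∧ (Eln G n).s f = b) :
    SimRel G (Nat.gcd P n) a.1.src b.1.src := by
  obtain ⟨⟨⟨e, μ⟩, hle, hrng⟩, hra, hsb⟩ := h
  have hb : μ = b.1 := congrArg Subtype.val hsb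
  by_cases hc : μ.length + 1 < n
  · have ha : a.1 = Path.cons e μ hrng := by
      rw [← hra]
      show (dite _ _ _ : PathLt G n).1 = _
      rw [dif_pos hc]
    have hab : a.1.src = b.1.src := by rw [ha, ← hb]; rfl
    rw [hab]
    exact simrel_refl _ _
  · have hle' : μ.length + 1 ≤ n := hle
    have hμn : μ.length + 1 = n := by omega
    have ha : a.1.src = G.r e := by
      rw [← hra]
      show ((dite _ _ _ : PathLt G n)).1.src = _
      rw [dif_neg hc]
      rfl
    refine ⟨Path.cons e μ hrng, ?_, ?_, ?_⟩
    · show μ.src = b.1.src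
      rw [hb]
    · show G.r e = a.1.src
      rw [ha]
    · rw [Path.length_cons, hμn]
      exact Nat.gcd_dvd_right _ _


/-- Lengths of closed paths (possibly empty) based at `w`. -/
def LoopLengths (G : DGraph) (w : G.V) : Set ℕ :=
  {k | ∃ c : G.Path, c.src = w ∧ c.rng = w ∧ c.length = k}

theorem loop_zero (w : G.V) : 0 ∈ LoopLengths G w :=
  ⟨Path.nil G w, rfl, rfl, rfl⟩

theorem loop_add {w : G.V} {a b : ℕ} (ha : a ∈ LoopLengths G w)
    (hb : b ∈ LoopLengths G w) : a + b ∈ LoopLengths G w := by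
  obtain ⟨c1, h11, h12, h13⟩ := ha
  obtain ⟨c2, h21, h22, h23⟩ := hb
  refine ⟨c1.append c2 (h11.trans h22.symm), by simpa using h21, ?_, ?_⟩
  · rw [Path.rng_append]; exact h12
  · rw [Path.length_append, h13, h23]

theorem loop_smul {w : G.V} {a : ℕ} (ha : a ∈ LoopLengths G w) :
    ∀ m : ℕ, m * a ∈ LoopLengths G w := by
  intro m
  induction m with
  | zero => simpa using loop_zero w
  | succ k ih => rw [Nat.succ_mul]; exact loop_add ih ha

theorem P_dvd_loop {P : ℕ} (hP : IsGCDOf P (CycleLengths G)) {w : G.V} {k : ℕ}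
    (hk : k ∈ LoopLengths G w) : P ∣ k := by
  obtain ⟨c, h1, h2, h3⟩ := hk
  rcases eq_or_ne k 0 with h | h
  · simp [h]
  · exact hP.1 k ⟨c, h2.trans h1.symm, fun hnil => h (by
      rw [← h3, length_eq_zero_iff]; exact hnil), h3⟩

theorem cycle_diff (hsc : StronglyConnected G) (w : G.V) {k : ℕ}
    (hk : k ∈ CycleLengths G) :
    ∃ a ∈ LoopLengths G w, ∃ b ∈ LoopLengths G w, a = b + k := by
  obtain ⟨c, hc1, hc2, hc3⟩ := hk
  set u := c.src with hu
  obtain ⟨g, hg1, hg2⟩ := hsc u w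
  obtain ⟨h, hh1, hh2⟩ := hsc w u
  have hcg : c.src = g.rng := by rw [hg2]
  have hhc : h.src = (c.append g hcg).rng := by
    rw [Path.rng_append, hc1, hh1]
  have hhg : h.src = g.rng := by rw [hg2, hh1]
  refine ⟨(h.append (c.append g hcg) hhc).length, ?_, (h.append g hhg).length, ?_, ?_⟩
  · refine ⟨_, ?_, ?_, rfl⟩
    · simp [hg1]
    · rw [Path.rng_append, hh2]
  · refine ⟨_, ?_, ?_, rfl⟩
    · simp [hg1]
    · rw [Path.rng_append, hh2]
  · rw [Path.length_append, Path.length_append, Path.length_append, hc3]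
    ring

theorem exists_base (hsc : StronglyConnected G) {P : ℕ}
    (hP : IsGCDOf P (CycleLengths G)) (w : G.V) :
    ∃ a ∈ LoopLengths G w, ∃ b ∈ LoopLengths G w, a = b + P := by
  set A : Set ℕ := LoopLengths G w with hA
  set H : AddSubgroup ℤ := AddSubgroup.closure ((fun m : ℕ => (m : ℤ)) '' A) with hH
  have hdiff : ∀ x ∈ H, ∃ a ∈ A, ∃ b ∈ A, x = (a : ℤ) - b := by
    intro x hx
    induction hx using AddSubgroup.closure_induction with
    | mem y hy =>
      obtain ⟨a, ha, rfl⟩ := hy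
      exact ⟨a, ha, 0, loop_zero w, by simp⟩
    | zero => exact ⟨0, loop_zero w, 0, loop_zero w, by simp⟩
    | add y z hy hz ihy ihz =>
      obtain ⟨a, ha, b, hb, rfl⟩ := ihy
      obtain ⟨c, hc, d, hd, rfl⟩ := ihz
      exact ⟨a + c, loop_add ha hc, b + d, loop_add hb hd, by push_cast; ring⟩
    | neg y hy ihy =>
      obtain ⟨a, ha, b, hb, rfl⟩ := ihy
      exact ⟨b, hb, a, ha, by ring⟩
  have hC : ∀ k ∈ CycleLengths G, (k : ℤ) ∈ H := by
    intro k hk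
    obtain ⟨a, ha, b, hb, hab⟩ := cycle_diff hsc w hk
    have haH : (a : ℤ) ∈ H := AddSubgroup.subset_closure ⟨a, ha, rfl⟩
    have hbH : (b : ℤ) ∈ H := AddSubgroup.subset_closure ⟨b, hb, rfl⟩
    have : (k : ℤ) = (a : ℤ) - b := by
      have h' : (a : ℤ) = (b : ℤ) + k := by exact_mod_cast hab
      omega
    rw [this]
    exact sub_mem haH hbH
  have hPH : (P : ℤ) ∈ H := by
    obtain ⟨g, hg⟩ := Int.subgroup_cyclic
      (AddSubgroup.closure ((fun m : ℕ => (m : ℤ)) '' CycleLengths G))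
    have h1 : ∀ k ∈ CycleLengths G, g ∣ (k : ℤ) := by
      intro k hk
      have hkmem : (k : ℤ) ∈ AddSubgroup.closure {g} := by
        rw [← hg]; exact AddSubgroup.subset_closure ⟨k, hk, rfl⟩
      obtain ⟨m, hm⟩ := AddSubgroup.mem_closure_singleton.mp hkmem
      exact ⟨m, by rw [← hm, zsmul_eq_mul, Int.cast_id, mul_comm]⟩
    have h2 : g.natAbs ∣ P := by
      apply hP.2
      intro k hk
      have := Int.natAbs_dvd_natAbs.mpr (h1 k hk)
      simpa using this
    have h3 : g ∣ (P : ℤ) := by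
      rw [← Int.natAbs_dvd]
      exact_mod_cast h2
    have h4 : (P : ℤ) ∈ AddSubgroup.closure {g} := by
      obtain ⟨c, hc⟩ := h3
      exact AddSubgroup.mem_closure_singleton.mpr ⟨c, by rw [zsmul_eq_mul, Int.cast_id, hc, mul_comm]⟩
    have h5 : AddSubgroup.closure ((fun m : ℕ => (m : ℤ)) '' CycleLengths G) ≤ H := by
      rw [AddSubgroup.closure_le]
      rintro x ⟨k, hk, rfl⟩
      exact hC k hk
    exact h5 (hg ▸ h4)
  obtain ⟨a, ha, b, hb, hab⟩ := hdiff _ hPH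
  exact ⟨a, ha, b, hb, by omega⟩

theorem mult_mem (hsc : StronglyConnected G) {P : ℕ}
    (hP : IsGCDOf P (CycleLengths G)) (w : G.V) :
    ∃ T : ℕ, ∀ t : ℕ, T ≤ t → t * P ∈ LoopLengths G w := by
  obtain ⟨a, ha, b, hb, hab⟩ := exists_base hsc hP w
  obtain ⟨y, hy⟩ := P_dvd_loop hP hb
  refine ⟨y * y, fun t ht => ?_⟩
  by_cases hy0 : y = 0
  · have hb0 : b = 0 := by rw [hy, hy0, Nat.mul_zero]
    have haP : a = P := by omega
    have := loop_smul ha t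
    rwa [haP] at this
  · have hylt : 0 < y := Nat.pos_of_ne_zero hy0
    set k := t % y with hk
    set q := t / y with hq
    have hkey : k < y := Nat.mod_lt _ hylt
    have hqy : y ≤ q := by
      rw [hq, Nat.le_div_iff_mul_le hylt]
      exact ht
    have hkq : k ≤ q := le_trans (le_of_lt hkey) hqy
    obtain ⟨j, hj⟩ : ∃ j, q = k + j := ⟨q - k, (Nat.add_sub_cancel' hkq).symm⟩
    have htqk : t = y * q + k := by
      rw [hq, hk, Nat.div_add_mod]
    have hmem : k * a + j * b ∈ LoopLengths G w :=
      loop_add (loop_smul ha k) (loop_smul hb j)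
    have heq : k * a + j * b = t * P := by
      rw [hab, hy, htqk, hj]
      ring
    rwa [heq] at hmem

theorem exists_good_path (hsc : StronglyConnected G) (hns : NoSources G)
    (n : ℕ) (hn : 0 < n) (P : ℕ) (hP : IsGCDOf P (CycleLengths G))
    {v w : G.V} (τ : G.Path) (h1 : τ.src = w) (h2 : τ.rng = v)
    (h3 : Nat.gcd P n ∣ τ.length) :
    ∃ σ : G.Path, σ.src = w ∧ σ.rng = v ∧ n ∣ σ.length := by
  -- P is positive
  have hcyc : ∃ c : G.Path, c.src = w ∧ c.rng = w ∧ c.edges ≠ [] := by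
    obtain ⟨e, he⟩ := hns w
    obtain ⟨p, hp1, hp2⟩ := hsc (G.s e) w
    exact ⟨Path.cons e p hp2, hp1, by simp [Path.cons, Path.rng, he], by simp [Path.cons]⟩
  have hP0 : 0 < P := by
    obtain ⟨c, hc1, hc2, hc3⟩ := hcyc
    have hmem : c.length ∈ CycleLengths G := ⟨c, hc2.trans hc1.symm, hc3, rfl⟩
    have hdvd := hP.1 _ hmem
    have hne : c.length ≠ 0 := fun h => hc3 ((length_eq_zero_iff c).mp h)
    rcases Nat.eq_zero_or_pos P with h | h
    · rw [h] at hdvd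
      exact absurd (Nat.eq_zero_of_zero_dvd hdvd) hne
    · exact h
  obtain ⟨T, hT⟩ := mult_mem hsc hP w
  -- number theory: find t ≥ T with n ∣ τ.length + t * P
  obtain ⟨k, hk⟩ := h3
  have hbez := Nat.gcd_eq_gcd_ab P n
  set m : ℤ := -(Nat.gcdA P n * k) with hm
  have hmdvd : (n : ℤ) ∣ ((τ.length : ℤ) + m * P) := by
    refine ⟨Nat.gcdB P n * k, ?_⟩
    have : (τ.length : ℤ) = ((P : ℤ) * Nat.gcdA P n + (n : ℤ) * Nat.gcdB P n) * k := by
      rw [← hbez]; exact_mod_cast hk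
    rw [this, hm]; ring
  have hnne : (n : ℤ) ≠ 0 := by exact_mod_cast Nat.pos_iff_ne_zero.mp hn
  have hmod_nonneg : 0 ≤ m % n := Int.emod_nonneg m hnne
  set t : ℕ := (m % n).toNat + n * T with ht
  have htT : T ≤ t := by
    have : T ≤ n * T := Nat.le_mul_of_pos_left T hn
    omega
  have htm : (n : ℤ) ∣ ((t : ℤ) - m) := by
    refine ⟨(T : ℤ) - m / n, ?_⟩
    rw [ht]
    push_cast
    rw [Int.toNat_of_nonneg hmod_nonneg, Int.emod_def]
    ring
  have hdvd2 : (n : ℤ) ∣ ((τ.length : ℤ) + (t : ℤ) * P) := by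
    have heq : ((τ.length : ℤ) + (t : ℤ) * P)
        = ((τ.length : ℤ) + m * P) + ((t : ℤ) - m) * P := by ring
    rw [heq]
    exact dvd_add hmdvd (htm.mul_right _)
  obtain ⟨c, hc1, hc2, hc3⟩ := hT t htT
  refine ⟨τ.append c (h1.trans hc2.symm), by simpa using hc1, ?_, ?_⟩
  · rw [Path.rng_append]; exact h2
  · rw [Path.length_append, hc3]
    have : ((τ.length + t * P : ℕ) : ℤ) = (τ.length : ℤ) + (t : ℤ) * P := by push_cast; ring
    exact_mod_cast (by rw [this]; exact hdvd2 : (n : ℤ) ∣ ((τ.length + t * P : ℕ) : ℤ))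

end DGraph

open DGraph in
/-- Let `E` be a strongly connected finite directed graph with no sources
and `n ≥ 1`.  The connected components of `E(n)` are exactly the sets
`{μ ∈ E^{<n} : s(μ) ∈ Λ}` indexed by the equivalence classes `Λ` of `∼_n` on `E^0`:
two vertices of `E(n)` lie in the same component iff their sources are `∼_n`-equivalent. -/
theorem Eln_components_are_source_classes (G : DGraph) [Finite G.V] [Finite G.E]
    (hsc : StronglyConnected G) (hns : NoSources G)
    (n : ℕ) (hn : 0 < n) (P : ℕ) (hP : IsGCDOf P (CycleLengths G)) :
    ∀ p q : (Eln G n).V, Comp (Eln G n) p q ↔ SimRel G (Nat.gcd P n) p.1.src q.1.src := by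

  intro p q
  constructor
  · intro h
    induction h with
    | rel a b hab => exact adj_simrel n P hab
    | refl a => exact simrel_refl _ _
    | symm a b _ ih => exact simrel_symm hsc hP ih
    | trans a b c _ _ ih1 ih2 => exact simrel_trans ih1 ih2
  · rintro ⟨τ, h1, h2, h3⟩
    obtain ⟨σ, hs1, hs2, hs3⟩ := exists_good_path hsc hns n hn P hP τ h1 h2 h3
    have c1 := comp_to_nil n hn p
    have c2 := comp_to_nil n hn q
    have c3 := nil_comp_nil n hn σ hs3
    rw [hs1, hs2] at c3
    exact Relation.EqvGen.trans _ _ _ c1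
      (Relation.EqvGen.trans _ _ _ c3 (Relation.EqvGen.symm _ _ c2))
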